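/- arXiv:1203.0696 — 2 statements merged into one kernel-verified Lean document; each statement's English description precedes it below -/
import Mathlib

section
/- For every ε ∈ (0, 1/2], there exists x in the state-action polytope X(ε) whose rate pair equals (r₁, r₂) = ( (1−ε)²/4 , (2−ε)/4 ). (This is the rate pair of the stationary deterministic policy that stays at queue 1 only in state (1,1,0), switches from queue 1 in states (1,1,1), (1,0,1), (1,0,0), stays at queue 2 in states (2,1,1), (2,0,1), (2,0,0), and switches from queue 2 in state (2,1,0).) -/
open Finset

/-- State of the symmetric Gilbert–Elliot two-queue model:
`(m, c₁, c₂)` where `m = true` means the server is at queue 1,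
and `cᵢ = true` means channel `i` is ON. -/
abbrev GEState : Type := Bool × Bool × Bool

/-- One-step symmetric channel transition with flip probability `ε`:
the channel keeps its value with probability `1 - ε` and flips it with probability `ε`. -/
noncomputable def chFlip (ε : ℝ) (c c' : Bool) : ℝ := if c = c' then 1 - ε else ε

/-- Transition probability of going to state `s'` from state `s` under action `a`
(`a = true` means "stay", `a = false` means "switch"). -/
noncomputable def GEP (ε : ℝ) (s' s : GEState) (a : Bool) : ℝ :=
  (if s'.1 = (if a then s.1 else !s.1) then (1 : ℝ) else 0) *
    chFlip ε s.2.1 s'.2.1 * chFlip ε s.2.2 s'.2.2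

/-- The state-action polytope `X(ε)`: nonnegative, normalized vectors satisfying the
balance equations. -/
def GEX (ε : ℝ) : Set (GEState × Bool → ℝ) :=
  {x | (∀ sa, 0 ≤ x sa) ∧ (∑ sa : GEState × Bool, x sa) = 1 ∧
    ∀ s : GEState, (∑ a : Bool, x (s, a)) =
      ∑ s' : GEState, ∑ a : Bool, GEP ε s s' a * x (s', a)}

/-- Rate of queue 1: frequency of staying at queue 1 with channel 1 ON. -/
noncomputable def GErate1 (x : GEState × Bool → ℝ) : ℝ :=
  x ((true, true, true), true) + x ((true, true, false), true)

/-- Rate of queue 2: frequency of staying at queue 2 with channel 2 ON. -/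
noncomputable def GErate2 (x : GEState × Bool → ℝ) : ℝ :=
  x ((false, true, true), true) + x ((false, false, true), true)

/-- Occupation measure of the corner policy. -/
noncomputable def xcorner (ε : ℝ) : GEState × Bool → ℝ
  | ((true, true, true), false) => ε * (1 - ε) / 4
  | ((true, true, false), true) => (1 - ε) ^ 2 / 4
  | ((true, false, true), false) => ε ^ 2 / 4
  | ((true, false, false), false) => ε * (1 - ε) / 4
  | ((false, true, true), true) => (1 - ε + ε ^ 2) / 4
  | ((false, true, false), false) => (2 * ε - ε ^ 2) / 4
  | ((false, false, true), true) => (1 - ε ^ 2) / 4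
  | ((false, false, false), true) => (1 - ε + ε ^ 2) / 4
  | _ => 0

@[simp] lemma xc0 (ε : ℝ) : xcorner ε ((true, true, true), true) = 0 := rfl
@[simp] lemma xc1 (ε : ℝ) : xcorner ε ((true, true, true), false) = ε * (1 - ε) / 4 := rfl
@[simp] lemma xc2 (ε : ℝ) : xcorner ε ((true, true, false), true) = (1 - ε) ^ 2 / 4 := rfl
@[simp] lemma xc3 (ε : ℝ) : xcorner ε ((true, true, false), false) = 0 := rfl
@[simp] lemma xc4 (ε : ℝ) : xcorner ε ((true, false, true), true) = 0 := rfl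
@[simp] lemma xc5 (ε : ℝ) : xcorner ε ((true, false, true), false) = ε ^ 2 / 4 := rfl
@[simp] lemma xc6 (ε : ℝ) : xcorner ε ((true, false, false), true) = 0 := rfl
@[simp] lemma xc7 (ε : ℝ) : xcorner ε ((true, false, false), false) = ε * (1 - ε) / 4 := rfl
@[simp] lemma xc8 (ε : ℝ) : xcorner ε ((false, true, true), true) = (1 - ε + ε ^ 2) / 4 := rfl
@[simp] lemma xc9 (ε : ℝ) : xcorner ε ((false, true, true), false) = 0 := rfl
@[simp] lemma xc10 (ε : ℝ) : xcorner ε ((false, true, false), true) = 0 := rfl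
@[simp] lemma xc11 (ε : ℝ) : xcorner ε ((false, true, false), false) = (2 * ε - ε ^ 2) / 4 := rfl
@[simp] lemma xc12 (ε : ℝ) : xcorner ε ((false, false, true), true) = (1 - ε ^ 2) / 4 := rfl
@[simp] lemma xc13 (ε : ℝ) : xcorner ε ((false, false, true), false) = 0 := rfl
@[simp] lemma xc14 (ε : ℝ) : xcorner ε ((false, false, false), true) = (1 - ε + ε ^ 2) / 4 := rfl
@[simp] lemma xc15 (ε : ℝ) : xcorner ε ((false, false, false), false) = 0 := rfl

/-- For every `ε ∈ (0, 1/2]`, some `x` in the state-action polytope `X(ε)` has rate pair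
`((1-ε)²/4, (2-ε)/4)`. -/

theorem exists_rate_pair_corner' (ε : ℝ) (hε : ε ∈ Set.Ioc (0 : ℝ) (1 / 2)) :
    ∃ x ∈ GEX ε,
      GErate1 x = (1 - ε) ^ 2 / 4 ∧
      GErate2 x = (2 - ε) / 4 := by
  obtain ⟨h0, h1⟩ := hε
  have h1' : ε ≤ 1 := h1.trans (by norm_num)
  refine ⟨xcorner ε, ⟨?_, ?_, ?_⟩, ?_, ?_⟩
  · rintro ⟨⟨m, c1, c2⟩, a⟩
    cases m <;> cases c1 <;> cases c2 <;> cases a <;>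
      simp only [xc0,xc1,xc2,xc3,xc4,xc5,xc6,xc7,xc8,xc9,xc10,xc11,xc12,xc13,xc14,xc15] <;> nlinarith [sq_nonneg ε, sq_nonneg (1 - ε)]
  · simp [Fintype.sum_prod_type]; ring
  · rintro ⟨m, c1, c2⟩
    cases m <;> cases c1 <;> cases c2 <;>
      · simp [Fintype.sum_prod_type, GEP, chFlip]; ring
  · simp [GErate1]
  · simp [GErate2]; ring
end

section
/- Fix N ≥ 2 and p₀₁, p₁₀ ∈ (0,1) with p₀₁ + p₁₀ ≤ 1, and let C₀ = (p₁₀/(p₁₀+p₀₁))^N. Then there exists x in the state-action polytope X of the Gilbert–Elliot N-queue model with Σ_{i=1}^N r_i(x) = 1 − C₀ − ( p₁₀(1 − C₀) − p₀₁·C₀ ); in particular, the maximum of Σ_{i=1}^N r_i(x) over X equals 1 − C₀ − ( p₁₀(1 − C₀) − p₀₁·C₀ ), and it is attained by the greedy myopic stationary deterministic policy that stays at the current queue whenever its channel is ON and otherwise switches (in cyclic order) to a queue with ON channel if one exists. -/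
open Finset

/-- State of the Gilbert–Elliot `N`-queue model: the server location `m ∈ Fin N` and the
channel state vector `c : Fin N → Bool` (`true` = ON). -/
abbrev NState (N : ℕ) : Type := Fin N × (Fin N → Bool)

/-- One-step Gilbert–Elliot channel transition: from ON the channel moves to OFF with
probability `p₁₀`, from OFF it moves to ON with probability `p₀₁`. -/
noncomputable def chTrans (p01 p10 : ℝ) (c c' : Bool) : ℝ :=
  if c then (if c' then 1 - p10 else p10) else (if c' then p01 else 1 - p01)

/-- Transition probability of going to state `s'` from state `s` under action `a`:
the next location is `a`, and the channels move independently. -/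
noncomputable def NP (N : ℕ) (p01 p10 : ℝ) (s' s : NState N) (a : Fin N) : ℝ :=
  (if s'.1 = a then (1 : ℝ) else 0) * ∏ i : Fin N, chTrans p01 p10 (s.2 i) (s'.2 i)

/-- The state-action polytope `X`: nonnegative, normalized vectors satisfying the
balance equations. -/
def NX (N : ℕ) (p01 p10 : ℝ) : Set (NState N × Fin N → ℝ) :=
  {x | (∀ sa, 0 ≤ x sa) ∧ (∑ sa : NState N × Fin N, x sa) = 1 ∧
    ∀ s : NState N, (∑ a : Fin N, x (s, a)) =
      ∑ s' : NState N, ∑ a : Fin N, NP N p01 p10 s s' a * x (s', a)}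

/-- Rate of queue `i` under `x`: the frequency of staying at queue `i` while its
channel is ON. -/
noncomputable def Nrate (N : ℕ) (x : NState N × Fin N → ℝ) (i : Fin N) : ℝ :=
  ∑ c : Fin N → Bool, if c i then x ((i, c), i) else 0

/-- Cyclic distance from `m` to `j` in `{0, …, N-1}`: the number of forward steps from
`m` to reach `j` in cyclic order. -/
def cycDist (N : ℕ) (m j : Fin N) : ℕ := (j.val + N - m.val) % N

/-- The greedy myopic policy: at state `(m, c)`, stay at `m` if its channel is ON;
otherwise switch to the first queue with ON channel in cyclic order starting from `m`
(if one exists; otherwise stay). -/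
noncomputable def greedy (N : ℕ) (s : NState N) : Fin N :=
  if s.2 s.1 then s.1
  else if h : (Finset.univ.filter (fun j : Fin N => s.2 j = true)).Nonempty then
    ((Finset.univ.filter (fun j : Fin N => s.2 j = true)).exists_min_image
      (cycDist N s.1) h).choose
  else s.1

/-! ### Auxiliary lemmas -/

section StationaryExists
open Filter Topology
/-- Every finite stochastic matrix has a stationary distribution. -/
lemma exists_stationary {α : Type*} [Fintype α] [Nonempty α] [DecidableEq α]
    (Q : α → α → ℝ) (hQ0 : ∀ a b, 0 ≤ Q a b) (hQ1 : ∀ a, ∑ b, Q a b = 1) :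
    ∃ μ : α → ℝ, (∀ a, 0 ≤ μ a) ∧ (∑ a, μ a = 1) ∧ ∀ b, ∑ a, μ a * Q a b = μ b := by
  classical
  set T : (α → ℝ) → (α → ℝ) := fun v b => ∑ a, v a * Q a b with hT
  have hTpres : ∀ v : α → ℝ, (∀ a, 0 ≤ v a) ∧ (∑ a, v a = 1) →
      (∀ a, 0 ≤ T v a) ∧ (∑ a, T v a = 1) := by
    intro v ⟨h0, h1⟩
    constructor
    · intro b; exact Finset.sum_nonneg fun a _ => mul_nonneg (h0 a) (hQ0 a b)
    · have : ∑ b, T v b = ∑ a, v a * ∑ b, Q a b := by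
        rw [Finset.sum_comm (s := univ) (t := univ) (f := fun b a => v a * Q a b)]
        simp [Finset.mul_sum]
      rw [this]; simp [hQ1, h1]
  set v0 : α → ℝ := fun _ => (Fintype.card α : ℝ)⁻¹ with hv0
  have hcard : (0:ℝ) < (Fintype.card α : ℝ) := by
    exact_mod_cast Fintype.card_pos
  have hv0good : (∀ a, 0 ≤ v0 a) ∧ (∑ a, v0 a = 1) := by
    constructor
    · intro a; positivity
    · simp [hv0, Finset.card_univ, mul_inv_cancel₀ (ne_of_gt hcard)]
  set v : ℕ → (α → ℝ) := fun n => T^[n] v0 with hv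
  have hvgood : ∀ n, (∀ a, 0 ≤ v n a) ∧ (∑ a, v n a = 1) := by
    intro n; induction n with
    | zero => simpa [hv] using hv0good
    | succ n ih =>
      have : v (n+1) = T (v n) := by
        simp [hv, Function.iterate_succ_apply']
      rw [this]; exact hTpres _ ih
  have hvle1 : ∀ n a, v n a ≤ 1 := by
    intro n a
    calc v n a ≤ ∑ b, v n b :=
          Finset.single_le_sum (fun b _ => (hvgood n).1 b) (mem_univ a)
    _ = 1 := (hvgood n).2
  set A : ℕ → (α → ℝ) := fun n b => (∑ k ∈ Finset.range (n+1), v k b) / (n+1) with hA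
  have hAgood : ∀ n, (∀ a, 0 ≤ A n a) ∧ (∑ a, A n a = 1) := by
    intro n
    constructor
    · intro a
      apply div_nonneg (Finset.sum_nonneg fun k _ => (hvgood k).1 a)
      positivity
    · have : ∑ a, A n a = (∑ k ∈ Finset.range (n+1), ∑ a, v k a) / (n+1) := by
        rw [Finset.sum_comm]
        rw [Finset.sum_div]
      rw [this]
      simp only [(fun k => (hvgood k).2)]
      simp only [Finset.sum_const, Finset.card_range, nsmul_eq_mul, mul_one]
      have : ((n:ℝ)+1) ≠ 0 := by positivity
      field_simp
      exact Nat.cast_succ n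
  have hAle1 : ∀ n a, A n a ≤ 1 := by
    intro n a
    calc A n a ≤ ∑ b, A n b :=
          Finset.single_le_sum (fun b _ => (hAgood n).1 b) (mem_univ a)
    _ = 1 := (hAgood n).2
  -- compactness
  have hcomp : IsCompact (Set.pi Set.univ fun _ : α => Set.Icc (0:ℝ) 1) :=
    isCompact_univ_pi fun _ => isCompact_Icc
  have hmem : ∀ n, A n ∈ Set.pi Set.univ fun _ : α => Set.Icc (0:ℝ) 1 := by
    intro n a _; exact ⟨(hAgood n).1 a, hAle1 n a⟩
  obtain ⟨μ, hμmem, φ, hφ, hlim⟩ := hcomp.tendsto_subseq hmem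
  have hlimb : ∀ b, Tendsto (fun n => A (φ n) b) atTop (𝓝 (μ b)) := by
    intro b; exact (tendsto_pi_nhds.mp hlim) b
  refine ⟨μ, ?_, ?_, ?_⟩
  · intro a; exact (hμmem a (Set.mem_univ a)).1
  · have h1 : Tendsto (fun n => ∑ a, A (φ n) a) atTop (𝓝 (∑ a, μ a)) :=
      tendsto_finset_sum _ fun a _ => hlimb a
    have h2 : (fun n => ∑ a, A (φ n) a) = fun _ => (1:ℝ) := by
      funext n; exact (hAgood (φ n)).2
    rw [h2] at h1
    exact (tendsto_const_nhds_iff.mp h1).symm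
  · -- invariance
    intro b
    -- T (A n) b = A n b + (v (n+1) b - v 0 b) / (n+1)
    have key : ∀ n, T (A n) b = A n b + (v (n+1) b - v 0 b) / (n+1) := by
      intro n
      have hTA : T (A n) b = (∑ k ∈ Finset.range (n+1), T (v k) b) / (n+1) := by
        simp only [hT, hA]
        rw [Finset.sum_div]
        simp only [div_mul_eq_mul_div, Finset.sum_mul, ← Finset.sum_div]
        rw [Finset.sum_comm]
      have hiter : ∀ k, T (v k) = v (k+1) := by
        intro k; simp [hv, Function.iterate_succ_apply']
      have htel : ∑ k ∈ Finset.range (n+1), T (v k) b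
          = (∑ k ∈ Finset.range (n+1), v k b) + v (n+1) b - v 0 b := by
        have h1 : ∑ k ∈ Finset.range (n+1), T (v k) b
            = ∑ k ∈ Finset.range (n+1), v (k+1) b := by
          apply Finset.sum_congr rfl; intro k _; rw [hiter k]
        have h2 := Finset.sum_range_succ' (fun k => v k b) (n+1)
        have h3 := Finset.sum_range_succ (fun k => v k b) (n+1)
        rw [h1]
        have : ∑ k ∈ Finset.range (n+1), v (k+1) b
            = ∑ k ∈ Finset.range (n+2), v k b - v 0 b := by
          rw [h2]; ring
        rw [this, h3]
      rw [hTA, htel]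
      have hne : ((n:ℝ)+1) ≠ 0 := by positivity
      simp only [hA]
      field_simp
      ring
    -- the correction term tends to 0
    have hcor : Tendsto (fun n : ℕ => (v (n+1) b - v 0 b) / (n+1)) atTop (𝓝 0) := by
      have hb : ∀ n : ℕ, ‖(v (n+1) b - v 0 b) / (n+1)‖ ≤ 2 / (n+1) := by
        intro n
        rw [norm_div]
        have h1 : ‖((n:ℝ)+1)‖ = (n:ℝ)+1 := by
          rw [Real.norm_eq_abs, abs_of_pos]; positivity
        rw [h1]
        have habs : ∀ m, ‖v m b‖ ≤ 1 := by
          intro m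
          rw [Real.norm_eq_abs, abs_le]
          exact ⟨by linarith [(hvgood m).1 b], hvle1 m b⟩
        have h2 : ‖v (n+1) b - v 0 b‖ ≤ 2 := by
          calc ‖v (n+1) b - v 0 b‖ ≤ ‖v (n+1) b‖ + ‖v 0 b‖ := norm_sub_le _ _
          _ ≤ 2 := by linarith [habs (n+1), habs 0]
        gcongr
      apply squeeze_zero_norm hb
      have h0 : Tendsto (fun n : ℕ => (1:ℝ) / ((n:ℝ) + 1)) atTop (𝓝 0) :=
        tendsto_one_div_add_atTop_nhds_zero_nat
      have := h0.const_mul (2:ℝ)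
      simp only [mul_zero] at this
      apply this.congr
      intro n
      rw [mul_one_div]
    have hφtop : Tendsto φ atTop atTop := hφ.tendsto_atTop
    have hTA1 : Tendsto (fun n => T (A (φ n)) b) atTop (𝓝 (μ b)) := by
      have := (hlimb b).add ((hcor.comp hφtop).congr (fun n => rfl))
      rw [add_zero] at this
      apply this.congr
      intro n
      exact (key (φ n)).symm
    have hTA2 : Tendsto (fun n => T (A (φ n)) b) atTop (𝓝 (T μ b)) := by
      have hc : Continuous fun w : α → ℝ => T w b := by
        apply continuous_finset_sum
        intro a _
        exact (continuous_apply a).mul continuous_const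
      exact (hc.tendsto μ).comp hlim
    have := tendsto_nhds_unique hTA2 hTA1
    simpa [hT] using this
end StationaryExists

section Channel
variable {N : ℕ} {p01 p10 : ℝ}

/-- channel kernel on `Fin N → Bool` -/
noncomputable def chK (N : ℕ) (p01 p10 : ℝ) (c c' : Fin N → Bool) : ℝ :=
  ∏ i, chTrans p01 p10 (c i) (c' i)

lemma chTrans_nonneg (h01 : p01 ∈ Set.Ioo (0:ℝ) 1) (h10 : p10 ∈ Set.Ioo (0:ℝ) 1)
    (a b : Bool) : 0 ≤ chTrans p01 p10 a b := by
  obtain ⟨h1, h2⟩ := h01; obtain ⟨h3, h4⟩ := h10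
  cases a <;> cases b <;> simp [chTrans] <;> linarith

lemma chTrans_sum (a : Bool) :
    chTrans p01 p10 a false + chTrans p01 p10 a true = 1 := by
  cases a <;> simp [chTrans] <;> ring

lemma chTrans_lb (h01 : p01 ∈ Set.Ioo (0:ℝ) 1) (h10 : p10 ∈ Set.Ioo (0:ℝ) 1)
    (hsum : p01 + p10 ≤ 1) (a b : Bool) :
    min p01 p10 ≤ chTrans p01 p10 a b := by
  obtain ⟨h1, h2⟩ := h01; obtain ⟨h3, h4⟩ := h10
  have hm1 : min p01 p10 ≤ p01 := min_le_left _ _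
  have hm2 : min p01 p10 ≤ p10 := min_le_right _ _
  have e1 : chTrans p01 p10 false false = 1 - p01 := by simp [chTrans]
  have e2 : chTrans p01 p10 false true = p01 := by simp [chTrans]
  have e3 : chTrans p01 p10 true false = p10 := by simp [chTrans]
  have e4 : chTrans p01 p10 true true = 1 - p10 := by simp [chTrans]
  cases a <;> cases b <;> simp only [e1, e2, e3, e4] <;> linarith

/-- sum over boolean vectors of a product factorizes -/
lemma sum_pi_bool (f : Fin N → Bool → ℝ) :
    ∑ c : Fin N → Bool, ∏ i, f i (c i) = ∏ i, (f i false + f i true) := by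
  classical
  rw [← Fintype.prod_sum f]
  exact Finset.prod_congr rfl fun i _ => by rw [Fintype.sum_bool]; ring

lemma chK_sum (c : Fin N → Bool) : ∑ c', chK N p01 p10 c c' = 1 := by
  have := sum_pi_bool (fun i b => chTrans p01 p10 (c i) b)
  simp only [chK, this, chTrans_sum, Finset.prod_const_one]

lemma sum_pi_bool_cond (f : Fin N → Bool → ℝ) (j : Fin N) (b : Bool)
    (hone : ∀ i, f i false + f i true = 1) :
    ∑ c : Fin N → Bool, (if c j = b then ∏ i, f i (c i) else 0) = f j b := by
  classical
  set g : Fin N → Bool → ℝ := fun i x => if i = j then (if x = b then f i x else 0) else f i x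
    with hg
  have hpt : ∀ c : Fin N → Bool,
      (if c j = b then ∏ i, f i (c i) else 0) = ∏ i, g i (c i) := by
    intro c
    by_cases h : c j = b
    · rw [if_pos h]
      apply Finset.prod_congr rfl
      intro i _
      by_cases hij : i = j
      · subst hij; simp [hg, h]
      · simp [hg, hij]
    · rw [if_neg h]
      symm
      apply Finset.prod_eq_zero (Finset.mem_univ j)
      simp [hg, h]
  rw [Finset.sum_congr rfl fun c _ => hpt c, sum_pi_bool]
  have hjg : g j false + g j true = f j b := by
    cases b <;> simp [hg]
  rw [← Finset.prod_erase_mul _ _ (Finset.mem_univ j), hjg]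
  have : ∏ i ∈ Finset.univ.erase j, (g i false + g i true) = 1 := by
    apply Finset.prod_eq_one
    intro i hi
    have hij : i ≠ j := Finset.ne_of_mem_erase hi
    simp [hg, hij, hone i]
  rw [this, one_mul]

lemma chK_marg (c : Fin N → Bool) (j : Fin N) (b : Bool) :
    ∑ c' : Fin N → Bool, (if c' j = b then chK N p01 p10 c c' else 0)
      = chTrans p01 p10 (c j) b :=
  sum_pi_bool_cond (fun i x => chTrans p01 p10 (c i) x) j b (fun i => chTrans_sum _)

/-- the stationary distribution of a single channel -/
noncomputable def pi1 (p01 p10 : ℝ) (b : Bool) : ℝ :=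
  if b then p01 / (p01 + p10) else p10 / (p01 + p10)

/-- product stationary distribution -/
noncomputable def piD (N : ℕ) (p01 p10 : ℝ) (c : Fin N → Bool) : ℝ :=
  ∏ i, pi1 p01 p10 (c i)

lemma pi1_sum (hp : p01 + p10 ≠ 0) : pi1 p01 p10 false + pi1 p01 p10 true = 1 := by
  simp only [pi1, if_true, if_false, Bool.false_eq_true, ↓reduceIte]
  field_simp
  ring

lemma piD_sum (hp : p01 + p10 ≠ 0) : ∑ c, piD N p01 p10 c = 1 := by
  rw [show (fun c : Fin N → Bool => piD N p01 p10 c) = fun c => ∏ i, pi1 p01 p10 (c i) from rfl]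
  rw [sum_pi_bool (fun i b => pi1 p01 p10 b)]
  simp [pi1_sum hp]

lemma piD_station (hp : p01 + p10 ≠ 0) (c' : Fin N → Bool) :
    ∑ c, piD N p01 p10 c * chK N p01 p10 c c' = piD N p01 p10 c' := by
  have h1 : ∀ c : Fin N → Bool, piD N p01 p10 c * chK N p01 p10 c c'
      = ∏ i, (pi1 p01 p10 (c i) * chTrans p01 p10 (c i) (c' i)) := by
    intro c
    rw [piD, chK, ← Finset.prod_mul_distrib]
  rw [Finset.sum_congr rfl fun c _ => h1 c,
    sum_pi_bool (fun i b => pi1 p01 p10 b * chTrans p01 p10 b (c' i))]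
  apply Finset.prod_congr rfl
  intro i _
  cases hc : c' i <;> simp only [pi1, chTrans, if_true, if_false, Bool.false_eq_true, ↓reduceIte] <;> field_simp <;> ring

/-- Doeblin uniqueness: any invariant signed measure of total mass 1 equals `piD`. -/
lemma invariant_eq_piD (h01 : p01 ∈ Set.Ioo (0:ℝ) 1) (h10 : p10 ∈ Set.Ioo (0:ℝ) 1)
    (hsum : p01 + p10 ≤ 1) (y : (Fin N → Bool) → ℝ)
    (hy1 : ∑ c, y c = 1) (hinv : ∀ c', ∑ c, y c * chK N p01 p10 c c' = y c') :
    ∀ c, y c = piD N p01 p10 c := by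
  classical
  have hp : p01 + p10 ≠ 0 := by
    have := h01.1; have := h10.1; intro h; linarith
  set d : (Fin N → Bool) → ℝ := fun c => y c - piD N p01 p10 c with hd
  have hd0 : ∑ c, d c = 0 := by
    simp only [hd, Finset.sum_sub_distrib, hy1, piD_sum hp, sub_self]
  have hdinv : ∀ c', ∑ c, d c * chK N p01 p10 c c' = d c' := by
    intro c'
    simp only [hd, sub_mul, Finset.sum_sub_distrib, hinv c', piD_station hp c']
  set ε : ℝ := (min p01 p10) ^ N with hε
  have hδpos : 0 < min p01 p10 := lt_min h01.1 h10.1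
  have hεpos : 0 < ε := pow_pos hδpos N
  have hKlb : ∀ c c' : Fin N → Bool, ε ≤ chK N p01 p10 c c' := by
    intro c c'
    rw [hε, chK]
    calc (min p01 p10) ^ N = ∏ _i : Fin N, min p01 p10 := by
          rw [Finset.prod_const, Finset.card_univ, Fintype.card_fin]
    _ ≤ ∏ i, chTrans p01 p10 (c i) (c' i) := by
          apply Finset.prod_le_prod
          · intro i _; exact le_of_lt hδpos
          · intro i _; exact chTrans_lb h01 h10 hsum _ _
  set M : ℕ := Fintype.card (Fin N → Bool) with hM
  have hkey : ∀ c', d c' = ∑ c, d c * (chK N p01 p10 c c' - ε) := by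
    intro c'
    have : ∑ c, d c * (chK N p01 p10 c c' - ε)
        = (∑ c, d c * chK N p01 p10 c c') - ε * ∑ c, d c := by
      rw [Finset.mul_sum]
      rw [← Finset.sum_sub_distrib]
      apply Finset.sum_congr rfl; intro c _; ring
    rw [this, hdinv c', hd0, mul_zero, sub_zero]
  have habs : ∀ c', |d c'| ≤ ∑ c, |d c| * (chK N p01 p10 c c' - ε) := by
    intro c'
    rw [hkey c']
    calc |∑ c, d c * (chK N p01 p10 c c' - ε)| ≤ ∑ c, |d c * (chK N p01 p10 c c' - ε)| :=
          Finset.abs_sum_le_sum_abs _ _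
    _ = ∑ c, |d c| * (chK N p01 p10 c c' - ε) := by
          apply Finset.sum_congr rfl; intro c _
          rw [abs_mul,
            abs_of_nonneg (show (0:ℝ) ≤ chK N p01 p10 c c' - ε by linarith [hKlb c c'])]
  have hDsum : ∑ c', |d c'| ≤ (∑ c, |d c|) * (1 - M * ε) := by
    calc ∑ c', |d c'| ≤ ∑ c', ∑ c, |d c| * (chK N p01 p10 c c' - ε) :=
          Finset.sum_le_sum fun c' _ => habs c'
    _ = ∑ c, |d c| * ∑ c', (chK N p01 p10 c c' - ε) := by
          rw [Finset.sum_comm]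
          apply Finset.sum_congr rfl; intro c _
          rw [Finset.mul_sum]
    _ = (∑ c, |d c|) * (1 - M * ε) := by
          rw [Finset.sum_mul]
          apply Finset.sum_congr rfl; intro c _
          congr 1
          rw [Finset.sum_sub_distrib, chK_sum, Finset.sum_const, Finset.card_univ]
          push_cast
          ring
  have hDnonneg : 0 ≤ ∑ c, |d c| := Finset.sum_nonneg fun c _ => abs_nonneg _
  have hMpos : 0 < (M:ℝ) := by
    rw [hM]
    exact_mod_cast Fintype.card_pos
  have hD0 : ∑ c, |d c| = 0 := by
    have h1 : (∑ c, |d c|) * ((M:ℝ) * ε) ≤ 0 := by nlinarith [hDsum]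
    have h2 : 0 ≤ (∑ c, |d c|) * ((M:ℝ) * ε) :=
      mul_nonneg hDnonneg (by positivity)
    rcases mul_eq_zero.mp (le_antisymm h1 h2) with h | h
    · exact h
    · exfalso
      have : (0:ℝ) < (M:ℝ) * ε := by positivity
      linarith
  intro c
  have : |d c| = 0 := by
    have h1 : |d c| ≤ ∑ c', |d c'| :=
      Finset.single_le_sum (f := fun c' => |d c'|) (fun c' _ => abs_nonneg _)
        (Finset.mem_univ c)
    have := abs_nonneg (d c)
    linarith [h1, hD0.le]
  have := abs_eq_zero.mp this
  simp only [hd] at this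
  linarith
end Channel

section Greedy
variable {N : ℕ} {p01 p10 : ℝ}

lemma greedy_stay (s : NState N) (h : s.2 s.1 = true) : greedy N s = s.1 := by
  simp [greedy, h]

lemma greedy_on (s : NState N) (h : s.2 ≠ fun _ => false) :
    s.2 (greedy N s) = true := by
  classical
  by_cases h1 : s.2 s.1 = true
  · rw [greedy_stay s h1]; exact h1
  · have hex : ∃ i, s.2 i = true := by
      by_contra hc
      push_neg at hc
      apply h
      funext i
      have := hc i
      simpa using this
    obtain ⟨i, hi⟩ := hex
    have hne : (Finset.univ.filter (fun j : Fin N => s.2 j = true)).Nonempty :=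
      ⟨i, by simp [hi]⟩
    have hgr : greedy N s =
        ((Finset.univ.filter (fun j : Fin N => s.2 j = true)).exists_min_image
          (cycDist N s.1) hne).choose := by
      unfold greedy
      rw [if_neg h1, dif_pos hne]
    rw [hgr]
    have hspec := ((Finset.univ.filter (fun j : Fin N => s.2 j = true)).exists_min_image
      (cycDist N s.1) hne).choose_spec
    have hmem := hspec.1
    simpa using hmem

lemma greedy_off (s : NState N) (h : s.2 = fun _ => false) :
    s.2 (greedy N s) = false := by
  rw [h]

lemma NP_nonneg (h01 : p01 ∈ Set.Ioo (0:ℝ) 1) (h10 : p10 ∈ Set.Ioo (0:ℝ) 1)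
    (s' s : NState N) (a : Fin N) : 0 ≤ NP N p01 p10 s' s a := by
  apply mul_nonneg
  · split <;> norm_num
  · exact Finset.prod_nonneg fun i _ => chTrans_nonneg h01 h10 _ _

lemma NP_sum (s : NState N) (a : Fin N) :
    ∑ s' : NState N, NP N p01 p10 s' s a = 1 := by
  rw [Fintype.sum_prod_type]
  have h1 : ∀ m' : Fin N,
      (∑ c' : Fin N → Bool, NP N p01 p10 (m', c') s a)
        = if m' = a then (1:ℝ) else 0 := by
    intro m'
    simp only [NP]
    have : ∑ c' : Fin N → Bool,
        (if m' = a then (1:ℝ) else 0) * ∏ i, chTrans p01 p10 (s.2 i) (c' i)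
          = (if m' = a then (1:ℝ) else 0)
            * ∑ c' : Fin N → Bool, ∏ i, chTrans p01 p10 (s.2 i) (c' i) :=
      (Finset.mul_sum _ _ _).symm
    have h2 : ∑ c' : Fin N → Bool, ∏ i, chTrans p01 p10 (s.2 i) (c' i) = 1 := chK_sum s.2
    rw [this, h2, mul_one]
  rw [Finset.sum_congr rfl fun m' _ => h1 m']
  simp

lemma NP_marg_on (s : NState N) (a : Fin N) :
    ∑ s' : NState N, (if s'.2 s'.1 = true then NP N p01 p10 s' s a else 0)
      = chTrans p01 p10 (s.2 a) true := by
  rw [Fintype.sum_prod_type]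
  rw [Finset.sum_eq_single a]
  · have h1 : ∀ c' : Fin N → Bool,
        (if c' a = true then NP N p01 p10 (a, c') s a else 0)
          = (if c' a = true then chK N p01 p10 s.2 c' else 0) := by
      intro c'
      simp [NP, chK]
    rw [Finset.sum_congr rfl fun c' _ => h1 c']
    exact chK_marg s.2 a true
  · intro m' _ hm'
    apply Finset.sum_eq_zero
    intro c' _
    simp [NP, hm']
  · intro h
    exact absurd (Finset.mem_univ a) h

lemma piD_off : piD N p01 p10 (fun _ => false) = (p10 / (p01 + p10)) ^ N := by
  simp [piD, pi1, Finset.prod_const, Finset.card_univ, div_pow]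

/-- channel marginal of any element of the polytope is the product stationary law -/
lemma NX_marg (h01 : p01 ∈ Set.Ioo (0:ℝ) 1) (h10 : p10 ∈ Set.Ioo (0:ℝ) 1)
    (hsum : p01 + p10 ≤ 1) (x : NState N × Fin N → ℝ) (hx : x ∈ NX N p01 p10)
    (c : Fin N → Bool) :
    (∑ m : Fin N, ∑ a : Fin N, x ((m, c), a)) = piD N p01 p10 c := by
  classical
  obtain ⟨hx0, hx1, hxb⟩ := hx
  set y : (Fin N → Bool) → ℝ := fun c => ∑ m : Fin N, ∑ a : Fin N, x ((m, c), a) with hy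
  have hy1 : ∑ c, y c = 1 := by
    rw [← hx1]
    calc ∑ c, y c
        = ∑ c : Fin N → Bool, ∑ m : Fin N, ∑ a : Fin N, x ((m, c), a) := rfl
    _ = ∑ m : Fin N, ∑ c : Fin N → Bool, ∑ a : Fin N, x ((m, c), a) := Finset.sum_comm
    _ = ∑ s : NState N, ∑ a : Fin N, x (s, a) :=
          (Fintype.sum_prod_type (fun s : NState N => ∑ a : Fin N, x (s, a))).symm
    _ = ∑ sa : NState N × Fin N, x sa :=
          (Fintype.sum_prod_type (fun sa : NState N × Fin N => x sa)).symm
  have hyinv : ∀ c', ∑ c, y c * chK N p01 p10 c c' = y c' := by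
    intro c'
    have E1 : ∑ c, y c * chK N p01 p10 c c'
        = ∑ c : Fin N → Bool, ∑ m : Fin N, ∑ a : Fin N,
            chK N p01 p10 c c' * x ((m, c), a) := by
      apply Finset.sum_congr rfl
      intro c _
      rw [Finset.sum_mul]
      apply Finset.sum_congr rfl
      intro m _
      rw [Finset.sum_mul]
      apply Finset.sum_congr rfl
      intro a _
      ring
    have step2 : ∀ s' : NState N, ∀ a : Fin N,
        (∑ m : Fin N, NP N p01 p10 (m, c') s' a * x (s', a))
          = chK N p01 p10 s'.2 c' * x (s', a) := by
      intro s' a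
      rw [← Finset.sum_mul]
      congr 1
      simp only [NP, chK]
      rw [← Finset.sum_mul]
      simp
    have E2 : y c' = ∑ c : Fin N → Bool, ∑ m : Fin N, ∑ a : Fin N,
        chK N p01 p10 c c' * x ((m, c), a) := by
      calc y c' = ∑ m : Fin N, ∑ s' : NState N, ∑ a : Fin N,
            NP N p01 p10 (m, c') s' a * x (s', a) :=
            Finset.sum_congr rfl fun m _ => hxb (m, c')
      _ = ∑ s' : NState N, ∑ m : Fin N, ∑ a : Fin N,
            NP N p01 p10 (m, c') s' a * x (s', a) := Finset.sum_comm
      _ = ∑ s' : NState N, ∑ a : Fin N, ∑ m : Fin N,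
            NP N p01 p10 (m, c') s' a * x (s', a) :=
            Finset.sum_congr rfl fun s' _ => Finset.sum_comm
      _ = ∑ s' : NState N, ∑ a : Fin N, chK N p01 p10 s'.2 c' * x (s', a) :=
            Finset.sum_congr rfl fun s' _ => Finset.sum_congr rfl fun a _ => step2 s' a
      _ = ∑ m : Fin N, ∑ c : Fin N → Bool, ∑ a : Fin N,
            chK N p01 p10 c c' * x ((m, c), a) :=
            Fintype.sum_prod_type
              (fun s' : NState N => ∑ a : Fin N, chK N p01 p10 s'.2 c' * x (s', a))
      _ = ∑ c : Fin N → Bool, ∑ m : Fin N, ∑ a : Fin N,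
            chK N p01 p10 c c' * x ((m, c), a) := Finset.sum_comm
    rw [E1, ← E2]
  exact invariant_eq_piD h01 h10 hsum y hy1 hyinv c

end Greedy

section Main
variable {N : ℕ} {p01 p10 : ℝ}

lemma chTrans_greedy (s' : NState N) :
    chTrans p01 p10 (s'.2 (greedy N s')) true
      = (if s'.2 = (fun _ => false) then p01 else 1 - p10) := by
  by_cases h : s'.2 = fun _ => false
  · rw [if_pos h, greedy_off s' h]
    simp [chTrans]
  · rw [if_neg h, greedy_on s' h]
    simp [chTrans]

lemma chTrans_le_weight (hsum : p01 + p10 ≤ 1) (s' : NState N) (a : Fin N) :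
    chTrans p01 p10 (s'.2 a) true
      ≤ (if s'.2 = (fun _ => false) then p01 else 1 - p10) := by
  by_cases h : s'.2 = fun _ => false
  · rw [if_pos h, h]
    simp [chTrans]
  · rw [if_neg h]
    cases hsa : s'.2 a
    · simp only [chTrans, Bool.false_eq_true, if_false, if_true]
      linarith
    · simp [chTrans]

lemma weight_sum (h01 : p01 ∈ Set.Ioo (0:ℝ) 1) (h10 : p10 ∈ Set.Ioo (0:ℝ) 1)
    (hsum : p01 + p10 ≤ 1) (x : NState N × Fin N → ℝ) (hx : x ∈ NX N p01 p10) :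
    ∑ s' : NState N,
        (∑ a : Fin N, x (s', a)) * (if s'.2 = (fun _ => false) then p01 else 1 - p10)
      = (1 - p10) + (p01 + p10 - 1) * (p10 / (p01 + p10)) ^ N := by
  classical
  have htot : ∑ s' : NState N, ∑ a : Fin N, x (s', a) = 1 := by
    rw [← hx.2.1]
    exact (Fintype.sum_prod_type (fun sa : NState N × Fin N => x sa)).symm
  have hoff : ∑ m : Fin N, ∑ a : Fin N, x ((m, fun _ => false), a)
      = (p10 / (p01 + p10)) ^ N := by
    rw [NX_marg h01 h10 hsum x hx _, piD_off]
  calc ∑ s' : NState N,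
        (∑ a : Fin N, x (s', a)) * (if s'.2 = (fun _ => false) then p01 else 1 - p10)
      = ∑ s' : NState N, ((∑ a : Fin N, x (s', a)) * (1 - p10)
          + (if s'.2 = (fun _ => false)
              then (∑ a : Fin N, x (s', a)) * (p01 + p10 - 1) else 0)) := by
        apply Finset.sum_congr rfl
        intro s' _
        split <;> ring
  _ = (∑ s' : NState N, ∑ a : Fin N, x (s', a)) * (1 - p10)
        + ∑ s' : NState N, (if s'.2 = (fun _ => false)
            then (∑ a : Fin N, x (s', a)) * (p01 + p10 - 1) else 0) := by
        rw [Finset.sum_add_distrib, Finset.sum_mul]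
  _ = (1 - p10) + (p01 + p10 - 1) * (p10 / (p01 + p10)) ^ N := by
        rw [htot, one_mul]
        congr 1
        calc ∑ s' : NState N, (if s'.2 = (fun _ => false)
              then (∑ a : Fin N, x (s', a)) * (p01 + p10 - 1) else 0)
            = ∑ m : Fin N, ∑ c : Fin N → Bool, (if c = (fun _ => false)
                then (∑ a : Fin N, x ((m, c), a)) * (p01 + p10 - 1) else 0) :=
              Fintype.sum_prod_type (fun s' : NState N => if s'.2 = (fun _ => false)
                then (∑ a : Fin N, x (s', a)) * (p01 + p10 - 1) else 0)
        _ = ∑ m : Fin N, (∑ a : Fin N, x ((m, fun _ => false), a)) * (p01 + p10 - 1) := by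
              apply Finset.sum_congr rfl
              intro m _
              rw [Finset.sum_ite_eq' Finset.univ (fun _ => false)
                (fun c => (∑ a : Fin N, x ((m, c), a)) * (p01 + p10 - 1))]
              simp
        _ = (p01 + p10 - 1) * (p10 / (p01 + p10)) ^ N := by
              rw [← Finset.sum_mul, hoff]
              ring

/-- the sum rate as a single sum over states -/
lemma rate_sum_eq (x : NState N × Fin N → ℝ) :
    ∑ i : Fin N, Nrate N x i
      = ∑ s : NState N, (if s.2 s.1 = true then x (s, s.1) else 0) := by
  unfold Nrate
  exact (Fintype.sum_prod_type
    (fun s : NState N => if s.2 s.1 = true then x (s, s.1) else 0)).symm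

/-- the key exchange step: the ON-probability next state, for any `x ∈ NX`. -/
lemma on_sum_eq (h01 : p01 ∈ Set.Ioo (0:ℝ) 1) (h10 : p10 ∈ Set.Ioo (0:ℝ) 1)
    (x : NState N × Fin N → ℝ) (hx : x ∈ NX N p01 p10) :
    ∑ s : NState N, (if s.2 s.1 = true then (∑ a : Fin N, x (s, a)) else 0)
      = ∑ s' : NState N, ∑ a : Fin N, chTrans p01 p10 (s'.2 a) true * x (s', a) := by
  classical
  calc ∑ s : NState N, (if s.2 s.1 = true then (∑ a : Fin N, x (s, a)) else 0)
      = ∑ s : NState N, (if s.2 s.1 = true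
          then ∑ s' : NState N, ∑ a : Fin N, NP N p01 p10 s s' a * x (s', a) else 0) := by
        apply Finset.sum_congr rfl
        intro s _
        split
        · exact hx.2.2 s
        · rfl
  _ = ∑ s : NState N, ∑ s' : NState N, ∑ a : Fin N,
        (if s.2 s.1 = true then NP N p01 p10 s s' a * x (s', a) else 0) := by
        apply Finset.sum_congr rfl
        intro s _
        by_cases h : s.2 s.1 = true <;> simp [h]
  _ = ∑ s' : NState N, ∑ a : Fin N, ∑ s : NState N,
        (if s.2 s.1 = true then NP N p01 p10 s s' a * x (s', a) else 0) := by
        rw [Finset.sum_comm]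
        exact Finset.sum_congr rfl fun s' _ => Finset.sum_comm
  _ = ∑ s' : NState N, ∑ a : Fin N,
        (∑ s : NState N, (if s.2 s.1 = true then NP N p01 p10 s s' a else 0)) * x (s', a) := by
        apply Finset.sum_congr rfl
        intro s' _
        apply Finset.sum_congr rfl
        intro a _
        rw [Finset.sum_mul]
        apply Finset.sum_congr rfl
        intro s _
        split <;> simp
  _ = ∑ s' : NState N, ∑ a : Fin N, chTrans p01 p10 (s'.2 a) true * x (s', a) := by
        apply Finset.sum_congr rfl
        intro s' _
        apply Finset.sum_congr rfl
        intro a _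
        rw [NP_marg_on]

/-- upper bound on the sum rate for any element of the polytope -/
lemma rate_le (h01 : p01 ∈ Set.Ioo (0:ℝ) 1) (h10 : p10 ∈ Set.Ioo (0:ℝ) 1)
    (hsum : p01 + p10 ≤ 1) (x : NState N × Fin N → ℝ) (hx : x ∈ NX N p01 p10) :
    ∑ i : Fin N, Nrate N x i
      ≤ (1 - p10) + (p01 + p10 - 1) * (p10 / (p01 + p10)) ^ N := by
  classical
  rw [rate_sum_eq]
  have e1 : ∑ s : NState N, (if s.2 s.1 = true then x (s, s.1) else 0)
      ≤ ∑ s : NState N, (if s.2 s.1 = true then (∑ a : Fin N, x (s, a)) else 0) := by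
    apply Finset.sum_le_sum
    intro s _
    split
    · exact Finset.single_le_sum (f := fun a => x (s, a)) (fun a _ => hx.1 _)
        (Finset.mem_univ s.1)
    · exact le_refl _
  have e2 : ∑ s' : NState N, ∑ a : Fin N, chTrans p01 p10 (s'.2 a) true * x (s', a)
      ≤ ∑ s' : NState N,
          (∑ a : Fin N, x (s', a)) * (if s'.2 = (fun _ => false) then p01 else 1 - p10) := by
    apply Finset.sum_le_sum
    intro s' _
    rw [Finset.sum_mul]
    apply Finset.sum_le_sum
    intro a _
    rw [mul_comm (x (s', a))]
    exact mul_le_mul_of_nonneg_right (chTrans_le_weight hsum s' a) (hx.1 _)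
  calc ∑ s : NState N, (if s.2 s.1 = true then x (s, s.1) else 0)
      ≤ ∑ s : NState N, (if s.2 s.1 = true then (∑ a : Fin N, x (s, a)) else 0) := e1
  _ = ∑ s' : NState N, ∑ a : Fin N, chTrans p01 p10 (s'.2 a) true * x (s', a) := by
        exact on_sum_eq h01 h10 x hx
  _ ≤ (1 - p10) + (p01 + p10 - 1) * (p10 / (p01 + p10)) ^ N := by
        exact le_trans e2 (le_of_eq (weight_sum h01 h10 hsum x hx))

end Main

/-- With `C₀ = (p₁₀/(p₁₀+p₀₁))^N`, there is an `x` in the state-action polytope,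
supported on the greedy myopic policy's actions, whose sum rate equals
`1 - C₀ - (p₁₀(1-C₀) - p₀₁ C₀)`; in particular this value is the maximum of the sum
rate over the state-action polytope. -/
theorem greedy_achieves_sum_rate_bound (N : ℕ) (hN : 2 ≤ N) (p01 p10 : ℝ)
    (h01 : p01 ∈ Set.Ioo (0 : ℝ) 1) (h10 : p10 ∈ Set.Ioo (0 : ℝ) 1)
    (hsum : p01 + p10 ≤ 1) :
    (∃ x ∈ NX N p01 p10,
      (∀ s : NState N, ∀ a : Fin N, a ≠ greedy N s → x (s, a) = 0) ∧
      ∑ i : Fin N, Nrate N x i =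
        1 - (p10 / (p10 + p01)) ^ N -
          (p10 * (1 - (p10 / (p10 + p01)) ^ N) - p01 * (p10 / (p10 + p01)) ^ N)) ∧
    IsGreatest {r : ℝ | ∃ x ∈ NX N p01 p10, r = ∑ i : Fin N, Nrate N x i}
      (1 - (p10 / (p10 + p01)) ^ N -
        (p10 * (1 - (p10 / (p10 + p01)) ^ N) - p01 * (p10 / (p10 + p01)) ^ N)) := by
  classical
  have harith : (1 - p10) + (p01 + p10 - 1) * (p10 / (p01 + p10)) ^ N
      = 1 - (p10 / (p10 + p01)) ^ N -
          (p10 * (1 - (p10 / (p10 + p01)) ^ N) - p01 * (p10 / (p10 + p01)) ^ N) := by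
    rw [add_comm p10 p01]
    ring
  haveI : Nonempty (Fin N) := ⟨⟨0, by omega⟩⟩
  obtain ⟨μ, hμ0, hμ1, hμinv⟩ := exists_stationary
    (fun s s' : NState N => NP N p01 p10 s' s (greedy N s))
    (fun s s' => NP_nonneg h01 h10 s' s _)
    (fun s => NP_sum s (greedy N s))
  set x : NState N × Fin N → ℝ := fun sa => if sa.2 = greedy N sa.1 then μ sa.1 else 0
    with hxdef
  have hsum_a : ∀ s : NState N, ∑ a : Fin N, x (s, a) = μ s := by
    intro s
    simp only [hxdef]
    rw [Finset.sum_ite_eq' Finset.univ (greedy N s) (fun _ => μ s)]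
    simp
  have hxmem : x ∈ NX N p01 p10 := by
    refine ⟨?_, ?_, ?_⟩
    · intro sa
      simp only [hxdef]
      split
      · exact hμ0 _
      · exact le_refl _
    · calc ∑ sa : NState N × Fin N, x sa = ∑ s : NState N, ∑ a : Fin N, x (s, a) :=
            Fintype.sum_prod_type (fun sa : NState N × Fin N => x sa)
      _ = ∑ s : NState N, μ s := Finset.sum_congr rfl fun s _ => hsum_a s
      _ = 1 := hμ1
    · intro s
      rw [hsum_a s]
      have hstep : ∀ s' : NState N, ∑ a : Fin N, NP N p01 p10 s s' a * x (s', a)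
          = μ s' * NP N p01 p10 s s' (greedy N s') := by
        intro s'
        calc ∑ a : Fin N, NP N p01 p10 s s' a * x (s', a)
            = ∑ a : Fin N, (if a = greedy N s' then NP N p01 p10 s s' a * μ s' else 0) := by
              apply Finset.sum_congr rfl
              intro a _
              simp only [hxdef]
              split <;> simp
        _ = NP N p01 p10 s s' (greedy N s') * μ s' := by
              rw [Finset.sum_ite_eq' Finset.univ (greedy N s')
                (fun a => NP N p01 p10 s s' a * μ s')]
              simp
        _ = μ s' * NP N p01 p10 s s' (greedy N s') := mul_comm _ _
      rw [Finset.sum_congr rfl fun s' _ => hstep s']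
      exact (hμinv s).symm
  have hsupp : ∀ s : NState N, ∀ a : Fin N, a ≠ greedy N s → x (s, a) = 0 := by
    intro s a h
    simp [hxdef, h]
  have hrate : ∑ i : Fin N, Nrate N x i
      = (1 - p10) + (p01 + p10 - 1) * (p10 / (p01 + p10)) ^ N := by
    rw [rate_sum_eq]
    have e1 : ∑ s : NState N, (if s.2 s.1 = true then x (s, s.1) else 0)
        = ∑ s : NState N, (if s.2 s.1 = true then (∑ a : Fin N, x (s, a)) else 0) := by
      apply Finset.sum_congr rfl
      intro s _
      by_cases h : s.2 s.1 = true
      · rw [if_pos h, if_pos h, hsum_a s]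
        simp only [hxdef]
        rw [if_pos (greedy_stay s h).symm]
      · rw [if_neg h, if_neg h]
    rw [e1, on_sum_eq h01 h10 x hxmem]
    have e3 : ∑ s' : NState N, ∑ a : Fin N, chTrans p01 p10 (s'.2 a) true * x (s', a)
        = ∑ s' : NState N,
            (∑ a : Fin N, x (s', a)) * (if s'.2 = (fun _ => false) then p01 else 1 - p10) := by
      apply Finset.sum_congr rfl
      intro s' _
      rw [Finset.sum_mul]
      apply Finset.sum_congr rfl
      intro a _
      by_cases h : a = greedy N s'
      · rw [h, chTrans_greedy s']
        ring
      · rw [hsupp s' a h]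
        simp
    rw [e3, weight_sum h01 h10 hsum x hxmem]
  constructor
  · exact ⟨x, hxmem, hsupp, by rw [hrate, harith]⟩
  · constructor
    · exact ⟨x, hxmem, (hrate.trans harith).symm⟩
    · rintro r ⟨x', hx', rfl⟩
      rw [← harith]
      exact rate_le h01 h10 hsum x' hx'
end
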